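/- Let X be a complex Banach space, σ a nonempty compact subset of ℂ, and T a bounded linear operator on X with a B(σ) functional calculus Φ. For any Borel set Δ ⊆ ℂ, let P = Φ(χ_{Δ∩σ}), where χ_{Δ∩σ} is the characteristic function of Δ ∩ σ on σ. Then P² = P, P commutes with T, the range of P is a closed T-invariant subspace of X, and the spectrum of the restriction of T to the range of P is contained in the closure of Δ. -/

import Mathlib

/-- A function on `σ` is a member of `B(σ)` if it is Borel-measurable and bounded. -/
def IsBoundedBorel {σ : Set ℂ} (f : ↥σ → ℂ) : Prop :=
  Measurable f ∧ ∃ M : ℝ, ∀ z : ↥σ, ‖f z‖ ≤ M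

/-- The characteristic function of `Δ ∩ σ`, viewed as a function on `σ`. -/
noncomputable def charFun (σ Δ : Set ℂ) : ↥σ → ℂ :=
  Set.indicator (Subtype.val ⁻¹' Δ) (fun _ => (1 : ℂ))

/-- The restriction of a continuous linear operator to an invariant subspace. -/
def ContinuousLinearMap.restrictSubmodule {X : Type*} [NormedAddCommGroup X]
    [NormedSpace ℂ X] (T : X →L[ℂ] X) (p : Submodule ℂ X)
    (h : ∀ x ∈ p, T x ∈ p) : ↥p →L[ℂ] ↥p :=
  ContinuousLinearMap.codRestrict (T.comp p.subtypeL) p (fun x => h x x.2)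

/-- Let `X` be a complex Banach space, `σ ⊆ ℂ` nonempty and compact, and `T ∈ L(X)` an
operator with a `B(σ)` functional calculus `Φ`. For a Borel set `Δ ⊆ ℂ`, the operator
`P = Φ(χ_{Δ ∩ σ})` is a projection commuting with `T`, its range is a closed `T`-invariant
subspace of `X`, and the spectrum of the restriction of `T` to the range of `P` is
contained in the closure of `Δ`. -/
theorem stmt_10 {X : Type*} [NormedAddCommGroup X] [NormedSpace ℂ X] [CompleteSpace X]
    (σ : Set ℂ) (hσc : IsCompact σ) (hσne : σ.Nonempty)
    (T : X →L[ℂ] X)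
    (Φ : (↥σ → ℂ) → (X →L[ℂ] X))
    (hadd : ∀ f g : ↥σ → ℂ, IsBoundedBorel f → IsBoundedBorel g → Φ (f + g) = Φ f + Φ g)
    (hsmul : ∀ (c : ℂ) (f : ↥σ → ℂ), IsBoundedBorel f → Φ (c • f) = c • Φ f)
    (hmul : ∀ f g : ↥σ → ℂ, IsBoundedBorel f → IsBoundedBorel g → Φ (f * g) = Φ f * Φ g)
    (hone : Φ 1 = 1)
    (hT : Φ (fun z : ↥σ => (z : ℂ)) = T)
    (hbdd : ∃ C : ℝ, ∀ f : ↥σ → ℂ, IsBoundedBorel f → ‖Φ f‖ ≤ C * ⨆ z : ↥σ, ‖f z‖)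
    (Δ : Set ℂ) (hΔ : MeasurableSet Δ) :
    Φ (charFun σ Δ) * Φ (charFun σ Δ) = Φ (charFun σ Δ) ∧
    Commute (Φ (charFun σ Δ)) T ∧
    IsClosed (Set.range (Φ (charFun σ Δ))) ∧
    ∃ hinv : ∀ x ∈ LinearMap.range (Φ (charFun σ Δ) : X →ₗ[ℂ] X), T x ∈ LinearMap.range (Φ (charFun σ Δ) : X →ₗ[ℂ] X),
      spectrum ℂ (T.restrictSubmodule (LinearMap.range (Φ (charFun σ Δ) : X →ₗ[ℂ] X)) hinv)
        ⊆ closure Δ := by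
  classical
  set χ := charFun σ Δ with hχdef
  have hχmem : IsBoundedBorel χ := by
    refine ⟨measurable_const.indicator (measurable_subtype_coe hΔ), 1, fun z => ?_⟩
    by_cases hz : (z : ℂ) ∈ Δ <;> simp [hχdef, charFun, Set.indicator, hz]
  have hχχ : χ * χ = χ := by
    funext z
    by_cases hz : (z : ℂ) ∈ Δ <;> simp [hχdef, charFun, Set.indicator, hz]
  set P := Φ χ with hPdef
  have hPP : P * P = P := by rw [hPdef, ← hmul χ χ hχmem hχmem, hχχ]
  -- boundedness of the identity function on σ
  have hid : IsBoundedBorel (fun z : ↥σ => (z : ℂ)) := by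
    obtain ⟨M, hM⟩ := hσc.isBounded.exists_norm_le
    exact ⟨measurable_subtype_coe, M, fun z => hM z z.2⟩
  -- commutation
  have hPT : Commute P T := by
    have h1 : χ * (fun z : ↥σ => (z : ℂ)) = (fun z : ↥σ => (z : ℂ)) * χ :=
      mul_comm _ _
    unfold Commute SemiconjBy
    rw [hPdef, ← hT, ← hmul _ _ hχmem hid, ← hmul _ _ hid hχmem, h1]
  -- range of P is the fixed point set
  have hfix : ∀ x : X, x ∈ Set.range P → P x = x := by
    rintro x ⟨y, rfl⟩
    have := DFunLike.congr_fun hPP y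
    simpa using this
  have hclosed : IsClosed (Set.range P) := by
    have : Set.range P = {x | P x = x} := by
      ext x
      exact ⟨hfix x, fun h => ⟨x, h⟩⟩
    rw [this]
    exact isClosed_eq P.continuous continuous_id
  set p := LinearMap.range (P : X →ₗ[ℂ] X) with hpdef
  have hmemp : ∀ x : X, x ∈ p ↔ P x = x := by
    intro x
    constructor
    · rintro ⟨y, rfl⟩
      have := DFunLike.congr_fun hPP y
      simpa using this
    · intro h; exact ⟨x, h⟩
  have hinv : ∀ x ∈ p, T x ∈ p := by
    intro x hx
    rw [hmemp] at hx ⊢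
    have := DFunLike.congr_fun hPT.eq x
    simp only [ContinuousLinearMap.mul_apply] at this
    rw [this, hx]
  refine ⟨hPP, hPT, hclosed, hinv, ?_⟩
  intro μ hμsp
  by_contra hμ
  -- the resolvent-type function g
  set g : ↥σ → ℂ := Set.indicator (Subtype.val ⁻¹' Δ) (fun z : ↥σ => (μ - (z : ℂ))⁻¹)
    with hgdef
  have hμne : ∀ z : ↥σ, (z : ℂ) ∈ Δ → μ - (z : ℂ) ≠ 0 := by
    intro z hz
    refine sub_ne_zero.mpr fun h => hμ ?_
    rw [h]; exact subset_closure hz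
  have hg : IsBoundedBorel g := by
    refine ⟨((measurable_const.sub measurable_subtype_coe).inv).indicator
      (measurable_subtype_coe hΔ), (Metric.infDist μ Δ)⁻¹, fun z => ?_⟩
    by_cases hz : (z : ℂ) ∈ Δ
    · have hpos : 0 < Metric.infDist μ Δ := by
        rw [← Metric.infDist_closure]
        exact (isClosed_closure.notMem_iff_infDist_pos
          ((Set.nonempty_of_mem hz).closure)).mp hμ
      have hle : Metric.infDist μ Δ ≤ dist μ (z : ℂ) := Metric.infDist_le_dist_of_mem hz
      have : ‖g z‖ = ‖μ - (z : ℂ)‖⁻¹ := by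
        simp [hgdef, Set.indicator_of_mem, hz]
      rw [this, ← dist_eq_norm]
      exact inv_anti₀ hpos hle
    · have hg0 : g z = 0 := by
        rw [hgdef]
        exact Set.indicator_of_notMem (by simpa using hz) _
      rw [hg0, norm_zero]
      exact inv_nonneg.mpr Metric.infDist_nonneg
  -- the function μ - z
  set h : ↥σ → ℂ := μ • (1 : ↥σ → ℂ) + (-1 : ℂ) • (fun z : ↥σ => (z : ℂ)) with hhdef
  have hone' : IsBoundedBorel (1 : ↥σ → ℂ) := ⟨measurable_const, 1, fun z => by simp⟩
  have hsm : ∀ (c : ℂ) (f : ↥σ → ℂ), IsBoundedBorel f → IsBoundedBorel (c • f) := by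
    rintro c f ⟨hfm, M, hM⟩
    refine ⟨hfm.const_smul c, ‖c‖ * M, fun z => ?_⟩
    simp only [Pi.smul_apply, norm_smul]
    exact mul_le_mul_of_nonneg_left (hM z) (norm_nonneg c)
  have hh : IsBoundedBorel h := by
    rcases hsm μ 1 hone' with ⟨h1m, M1, hM1⟩
    rcases hsm (-1) _ hid with ⟨h2m, M2, hM2⟩
    refine ⟨h1m.add h2m, M1 + M2, fun z => ?_⟩
    exact (norm_add_le _ _).trans (add_le_add (hM1 z) (hM2 z))
  have hΦh : Φ h = algebraMap ℂ (X →L[ℂ] X) μ - T := by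
    rw [hhdef, hadd _ _ (hsm μ 1 hone') (hsm (-1) _ hid), hsmul _ _ hone',
      hsmul _ _ hid, hone, hT, Algebra.algebraMap_eq_smul_one]
    module
  have hhz : ∀ z : ↥σ, h z = μ - (z : ℂ) := by
    intro z
    simp [hhdef]
    ring
  have hgh : g * h = χ := by
    funext z
    by_cases hz : (z : ℂ) ∈ Δ
    · simp only [Pi.mul_apply, hhz, hχdef, charFun, Set.indicator_of_mem, hgdef,
        Set.mem_preimage, hz]
      exact inv_mul_cancel₀ (hμne z hz)
    · simp [hχdef, charFun, Set.indicator_of_notMem, hgdef, hz]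
  have hhg : h * g = χ := by rw [mul_comm, hgh]
  have hχg : χ * g = g := by
    funext z
    by_cases hz : (z : ℂ) ∈ Δ <;>
      simp [hχdef, charFun, Set.indicator, hgdef, hz]
  set Q := Φ g with hQdef
  set A := algebraMap ℂ (X →L[ℂ] X) μ - T with hAdef
  have hQA : Q * A = P := by rw [hQdef, ← hΦh, ← hmul _ _ hg hh, hgh]
  have hAQ : A * Q = P := by rw [hQdef, ← hΦh, ← hmul _ _ hh hg, hhg]
  have hPQ : P * Q = Q := by rw [hPdef, hQdef, ← hmul _ _ hχmem hg, hχg]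
  -- Q maps into p
  have hQp : ∀ x : X, Q x ∈ p := by
    intro x
    rw [hmemp]
    have := DFunLike.congr_fun hPQ x
    simpa using this
  have hAp : ∀ x ∈ p, A x ∈ p := by
    intro x hx
    rw [hAdef]
    simp only [ContinuousLinearMap.sub_apply, Algebra.algebraMap_eq_smul_one,
      ContinuousLinearMap.smul_apply, ContinuousLinearMap.one_apply]
    exact p.sub_mem (p.smul_mem μ hx) (hinv x hx)
  set T' := T.restrictSubmodule p hinv with hT'def
  set Q' := Q.restrictSubmodule p (fun x _ => hQp x) with hQ'def
  set A' := A.restrictSubmodule p hAp with hA'def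
  have hcoe : ∀ (S : X →L[ℂ] X) (hs : ∀ x ∈ p, S x ∈ p) (x : ↥p),
      ((S.restrictSubmodule p hs) x : X) = S (x : X) := by
    intro S hs x
    rfl
  have hA'eq : algebraMap ℂ (↥p →L[ℂ] ↥p) μ - T' = A' := by
    refine ContinuousLinearMap.ext fun x => Subtype.ext ?_
    simp only [ContinuousLinearMap.sub_apply, Algebra.algebraMap_eq_smul_one,
      ContinuousLinearMap.smul_apply, ContinuousLinearMap.one_apply]
    rw [hcoe A hAp x, hAdef]
    simp [Algebra.algebraMap_eq_smul_one]
    rfl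
  have hfixp : ∀ x : ↥p, P (x : X) = (x : X) := fun x => (hmemp _).mp x.2
  have hunit : IsUnit (algebraMap ℂ (↥p →L[ℂ] ↥p) μ - T') := by
    rw [hA'eq]
    refine isUnit_iff_exists.mpr ⟨Q', ?_, ?_⟩
    · refine ContinuousLinearMap.ext fun x => Subtype.ext ?_
      have h1 : (((A' * Q') x) : X) = A (Q (x : X)) := by
        rw [ContinuousLinearMap.mul_apply, hcoe A hAp, hcoe Q (fun x _ => hQp x)]
      rw [h1]
      have h2 := DFunLike.congr_fun hAQ (x : X)
      simp only [ContinuousLinearMap.mul_apply] at h2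
      rw [h2, hfixp x]
      rfl
    · refine ContinuousLinearMap.ext fun x => Subtype.ext ?_
      have h1 : (((Q' * A') x) : X) = Q (A (x : X)) := by
        rw [ContinuousLinearMap.mul_apply, hcoe Q (fun x _ => hQp x), hcoe A hAp]
      rw [h1]
      have h2 := DFunLike.congr_fun hQA (x : X)
      simp only [ContinuousLinearMap.mul_apply] at h2
      rw [h2, hfixp x]
      rfl
  exact (spectrum.notMem_iff.mpr hunit) hμsp
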